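/- Define θ(s) = 1/2 + e^{−s²}/(4·I_1(s)). Then θ(s) → 1/2 as s → +∞, θ(0) = 1, and θ(s)/s² → 1 as s → −∞. -/

import Mathlib

open MeasureTheory Real Filter Set

noncomputable def In (n : ℕ) (s : ℝ) : ℝ :=
  ∫ z in Set.Ioi (0 : ℝ), z ^ n * Real.exp (-(z - s) ^ 2)

noncomputable def theta (s : ℝ) : ℝ :=
  1 / 2 + Real.exp (-s ^ 2) / (4 * In 1 s)

noncomputable def G (s : ℝ) : ℝ := ∫ z in Set.Ioi (0:ℝ), z * Real.exp (2*s*z - z^2)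

lemma integrable_G (s : ℝ) : Integrable (fun z : ℝ => z * Real.exp (2*s*z - z^2)) := by
  have h1 : Integrable (fun z : ℝ => (z - s) * Real.exp (-(z-s)^2)) := by
    have := (integrable_mul_exp_neg_mul_sq (b := 1) one_pos).comp_sub_right s
    simpa using this
  have h2 : Integrable (fun z : ℝ => s * Real.exp (-(z-s)^2)) := by
    have := ((integrable_exp_neg_mul_sq (b := 1) one_pos).comp_sub_right s).const_mul s
    simpa using this
  have h3 := (h1.add h2).const_mul (Real.exp (s^2))
  refine h3.congr ?_
  filter_upwards with z
  have hE : Real.exp (s^2) * Real.exp (-(z-s)^2) = Real.exp (2*s*z - z^2) := by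
    rw [← Real.exp_add]; ring_nf
  calc Real.exp (s^2) * ((z - s) * Real.exp (-(z-s)^2) + s * Real.exp (-(z-s)^2))
      = z * (Real.exp (s^2) * Real.exp (-(z-s)^2)) := by ring
    _ = z * Real.exp (2*s*z - z^2) := by rw [hE]

lemma G_pos (s : ℝ) : 0 < G s := by
  rw [G]
  have hnn : 0 ≤ᵐ[volume.restrict (Ioi (0:ℝ))] fun z => z * Real.exp (2*s*z - z^2) := by
    filter_upwards [ae_restrict_mem measurableSet_Ioi] with z hz
    have : (0:ℝ) < z := hz
    positivity
  rw [setIntegral_pos_iff_support_of_nonneg_ae hnn (integrable_G s).integrableOn]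
  have hsub : Ioi (0:ℝ) ⊆ Function.support (fun z => z * Real.exp (2*s*z - z^2)) := by
    intro z hz
    have hz' : (0:ℝ) < z := hz
    have : 0 < z * Real.exp (2*s*z - z^2) := by positivity
    exact ne_of_gt this
  have : volume (Ioi (0:ℝ)) ≤ volume (Function.support (fun z => z * Real.exp (2*s*z - z^2)) ∩ Ioi 0) :=
    measure_mono (fun z hz => ⟨hsub hz, hz⟩)
  calc (0:ENNReal) < volume (Ioi (0:ℝ)) := by simp [Real.volume_Ioi]
    _ ≤ _ := this

lemma In_eq (s : ℝ) : In 1 s = Real.exp (-s^2) * G s := by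
  rw [In, G, ← MeasureTheory.integral_const_mul]
  congr 1
  funext z
  have hE : Real.exp (-s^2) * Real.exp (2*s*z - z^2) = Real.exp (-(z-s)^2) := by
    rw [← Real.exp_add]; ring_nf
  calc z ^ 1 * Real.exp (-(z - s)^2) = z * (Real.exp (-s^2) * Real.exp (2*s*z - z^2)) := by
        rw [hE]; ring
    _ = Real.exp (-s^2) * (z * Real.exp (2*s*z - z^2)) := by ring

lemma theta_eq (s : ℝ) : theta s = 1/2 + 1/(4 * G s) := by
  rw [theta, In_eq]
  congr 1
  rw [show (4:ℝ) * (Real.exp (-s^2) * G s) = Real.exp (-s^2) * (4 * G s) by ring]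
  rw [show Real.exp (-s^2) / (Real.exp (-s^2) * (4 * G s))
      = Real.exp (-s^2) * 1 / (Real.exp (-s^2) * (4 * G s)) by rw [mul_one]]
  exact mul_div_mul_left _ _ (Real.exp_ne_zero _)

lemma G_lower {s : ℝ} (hs : 0 ≤ s) : Real.exp (2*s - 4) ≤ G s := by
  have hsub : Ioc (1:ℝ) 2 ⊆ Ioi 0 := fun x hx => lt_trans zero_lt_one hx.1
  have hnn : 0 ≤ᵐ[volume.restrict (Ioi (0:ℝ))] fun z => z * Real.exp (2*s*z - z^2) := by
    filter_upwards [ae_restrict_mem measurableSet_Ioi] with z hz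
    have : (0:ℝ) < z := hz
    positivity
  have h1 : (∫ z in Ioc (1:ℝ) 2, z * Real.exp (2*s*z - z^2)) ≤ G s := by
    rw [G]
    exact setIntegral_mono_set (integrable_G s).integrableOn hnn
      (HasSubset.Subset.eventuallyLE hsub)
  have h2 : (∫ _z in Ioc (1:ℝ) 2, Real.exp (2*s - 4))
      ≤ ∫ z in Ioc (1:ℝ) 2, z * Real.exp (2*s*z - z^2) := by
    apply setIntegral_mono_on (integrableOn_const (by simp))
      ((integrable_G s).integrableOn) measurableSet_Ioc
    intro z hz
    have hz1 : (1:ℝ) ≤ z := le_of_lt hz.1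
    have hz2 : z ≤ 2 := hz.2
    have hexp : Real.exp (2*s - 4) ≤ Real.exp (2*s*z - z^2) := by
      apply Real.exp_le_exp.2
      nlinarith
    calc Real.exp (2*s - 4) = 1 * Real.exp (2*s - 4) := (one_mul _).symm
      _ ≤ z * Real.exp (2*s*z - z^2) :=
        mul_le_mul hz1 hexp (Real.exp_pos _).le (by linarith)
  have h3 : (∫ _z in Ioc (1:ℝ) 2, Real.exp (2*s - 4)) = Real.exp (2*s - 4) := by
    simp [Real.volume_Ioc]
    norm_num
  linarith

lemma part1 : Tendsto theta atTop (nhds (1 / 2)) := by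
  have hG : Tendsto (fun s => 4 * G s) atTop atTop := by
    apply tendsto_atTop_mono' atTop (f₁ := fun s => 4 * Real.exp (2*s - 4))
    · filter_upwards [eventually_ge_atTop (0:ℝ)] with s hs
      have := G_lower hs
      linarith
    · apply Tendsto.const_mul_atTop (by norm_num : (0:ℝ) < 4)
      apply Real.tendsto_exp_atTop.comp
      apply tendsto_atTop_add_const_right
      exact (tendsto_id (α := ℝ)).const_mul_atTop two_pos
  have h0 : Tendsto (fun s => 1 / (4 * G s)) atTop (nhds 0) := by
    have := hG.inv_tendsto_atTop
    rw [show (fun s => 4 * G s)⁻¹ = fun s => 1 / (4 * G s) by funext s; simp [one_div]] at this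
    exact this
  have := (tendsto_const_nhds (x := (1:ℝ)/2) (f := atTop)).add h0
  rw [add_zero] at this
  exact this.congr fun s => (theta_eq s).symm

lemma integral_mul_exp_neg_sq_Ioi : (∫ z in Ioi (0:ℝ), z * Real.exp (-z^2)) = 1/2 := by
  have hderiv : ∀ x ∈ Ioi (0:ℝ), HasDerivAt (fun z : ℝ => -Real.exp (-z^2) / 2)
      (x * Real.exp (-x^2)) x := by
    intro x _
    have h1 : HasDerivAt (fun z : ℝ => -z^2) (-(2*x)) x := by
      simpa using ((hasDerivAt_pow 2 x).fun_neg)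
    have h2 := (h1.exp).fun_neg.div_const 2
    exact h2.congr_deriv (by ring)
  have hint : IntegrableOn (fun z : ℝ => z * Real.exp (-z^2)) (Ioi 0) := by
    have := (integrable_mul_exp_neg_mul_sq (b := 1) one_pos).integrableOn (s := Ioi 0)
    simpa using this
  have hlim : Tendsto (fun z : ℝ => -Real.exp (-z^2) / 2) atTop (nhds 0) := by
    have h : Tendsto (fun z : ℝ => -z^2) atTop atBot := by
      apply tendsto_neg_atTop_atBot.comp
      exact tendsto_pow_atTop two_ne_zero
    have := (Real.tendsto_exp_atBot.comp h).neg.div_const 2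
    simpa using this
  have hcont : ContinuousWithinAt (fun z : ℝ => -Real.exp (-z^2) / 2) (Ici 0) 0 :=
    (Continuous.continuousWithinAt (by fun_prop))
  have := integral_Ioi_of_hasDerivAt_of_tendsto hcont hderiv hint hlim
  rw [this]
  norm_num

lemma part2 : theta 0 = 1 := by
  have hIn : In 1 0 = 1/2 := by
    rw [In]
    rw [show (∫ z in Ioi (0:ℝ), z ^ 1 * Real.exp (-(z - 0)^2))
        = ∫ z in Ioi (0:ℝ), z * Real.exp (-z^2) by congr 1; funext z; simp]
    exact integral_mul_exp_neg_sq_Ioi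
  rw [theta, hIn]
  norm_num

lemma keyCOV {s : ℝ} (hs : s < 0) :
    4 * s^2 * G s = ∫ v in Ioi (0:ℝ), v * Real.exp (-v - v^2/(4*s^2)) := by
  have hb : (0:ℝ) < -(2*s) := by linarith
  have hbne : -(2*s) ≠ 0 := ne_of_gt hb
  have hsne : s ≠ 0 := ne_of_lt hs
  have h := integral_comp_mul_left_Ioi
    (fun v => v / (-(2*s)) * Real.exp (-v - v^2/(4*s^2))) 0 hb
  rw [mul_zero] at h
  have h2 : (fun x : ℝ => (-(2*s)*x) / (-(2*s)) * Real.exp (-(-(2*s)*x) - (-(2*s)*x)^2/(4*s^2)))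
      = fun x : ℝ => x * Real.exp (2*s*x - x^2) := by
    funext x
    rw [mul_div_cancel_left₀ _ hbne]
    congr 2
    field_simp
    ring
  rw [h2] at h
  have h3 : (∫ v in Ioi (0:ℝ), v / (-(2*s)) * Real.exp (-v - v^2/(4*s^2)))
      = (∫ v in Ioi (0:ℝ), v * Real.exp (-v - v^2/(4*s^2))) / (-(2*s)) := by
    rw [← MeasureTheory.integral_div]
    congr 1
    funext v
    ring
  rw [h3] at h
  rw [G, h]
  rw [smul_eq_mul]
  field_simp
  ring

lemma integrable_bound : IntegrableOn (fun v : ℝ => v * Real.exp (-v)) (Ioi 0) := by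
  have h := Real.GammaIntegral_convergent (s := 2) (by norm_num)
  refine h.congr_fun ?_ measurableSet_Ioi
  intro x hx
  simp only [show (2:ℝ) - 1 = 1 by norm_num, Real.rpow_one]
  exact mul_comm _ _

lemma integral_exp_neg_Ioi_one : (∫ v in Ioi (0:ℝ), v * Real.exp (-v)) = 1 := by
  have hderiv : ∀ x ∈ Ioi (0:ℝ), HasDerivAt (fun v : ℝ => -((v+1) * Real.exp (-v)))
      (x * Real.exp (-x)) x := by
    intro x _
    have h1 : HasDerivAt (fun v : ℝ => v + 1) 1 x := (hasDerivAt_id x).add_const 1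
    have h2 : HasDerivAt (fun v : ℝ => Real.exp (-v)) (Real.exp (-x) * (-1)) x :=
      ((hasDerivAt_id x).neg).exp
    have h3 := (h1.fun_mul h2).fun_neg
    exact h3.congr_deriv (by ring)
  have hlim : Tendsto (fun v : ℝ => -((v+1) * Real.exp (-v))) atTop (nhds 0) := by
    have h1 := Real.tendsto_pow_mul_exp_neg_atTop_nhds_zero 1
    have h2 := Real.tendsto_exp_neg_atTop_nhds_zero
    have h3 := (h1.add h2).neg
    simp only [pow_one, neg_zero, add_zero] at h3
    refine h3.congr fun v => ?_
    ring
  have hcont : ContinuousWithinAt (fun v : ℝ => -((v+1) * Real.exp (-v))) (Ici 0) 0 :=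
    Continuous.continuousWithinAt (by fun_prop)
  have := integral_Ioi_of_hasDerivAt_of_tendsto hcont hderiv integrable_bound hlim
  rw [this]
  norm_num

lemma sq_tendsto : Tendsto (fun s : ℝ => s^2) atBot atTop := by
  have h1 : Tendsto (fun s : ℝ => s^2) atTop atTop :=
    tendsto_pow_atTop (by norm_num)
  have h2 : Tendsto (fun s : ℝ => -s) atBot atTop := tendsto_neg_atBot_atTop
  have := h1.comp h2
  refine this.congr fun s => ?_
  simp [Function.comp, neg_sq]

lemma part3' : Tendsto (fun s : ℝ => 4 * s^2 * G s) atBot (nhds 1) := by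
  have key : Tendsto (fun s : ℝ => ∫ v in Ioi (0:ℝ), v * Real.exp (-v - v^2/(4*s^2)))
      atBot (nhds (∫ v in Ioi (0:ℝ), v * Real.exp (-v))) := by
    apply tendsto_integral_filter_of_dominated_convergence
      (bound := fun v : ℝ => v * Real.exp (-v))
    · filter_upwards with s
      have hc : Continuous fun v : ℝ => v * Real.exp (-v - v^2/(4*s^2)) :=
        continuous_id.mul (Real.continuous_exp.comp
          (continuous_neg.sub ((continuous_pow 2).div_const _)))
      exact hc.aestronglyMeasurable.restrict
    · filter_upwards with s
      filter_upwards [ae_restrict_mem measurableSet_Ioi] with v hv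
      have hv' : (0:ℝ) < v := hv
      have hc : 0 ≤ v^2/(4*s^2) := by positivity
      have : Real.exp (-v - v^2/(4*s^2)) ≤ Real.exp (-v) :=
        Real.exp_le_exp.2 (by linarith)
      rw [Real.norm_eq_abs, abs_of_nonneg (by positivity)]
      exact mul_le_mul_of_nonneg_left this hv'.le
    · exact integrable_bound
    · filter_upwards with v
      have h1 : Tendsto (fun s : ℝ => 4 * s^2) atBot atTop :=
        sq_tendsto.const_mul_atTop (by norm_num : (0:ℝ) < 4)
      have h2 : Tendsto (fun s : ℝ => v^2/(4*s^2)) atBot (nhds 0) := by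
        have := h1.inv_tendsto_atTop.const_mul (v^2)
        rw [mul_zero] at this
        refine this.congr fun s => ?_
        simp [div_eq_mul_inv]
      have h3 : Tendsto (fun s : ℝ => -v - v^2/(4*s^2)) atBot (nhds (-v - 0)) :=
        tendsto_const_nhds.sub h2
      have h4 := ((Real.continuous_exp.tendsto _).comp h3).const_mul v
      rw [sub_zero] at h4
      exact h4
  rw [integral_exp_neg_Ioi_one] at key
  refine key.congr' ?_
  filter_upwards [eventually_lt_atBot (0:ℝ)] with s hs
  exact (keyCOV hs).symm

lemma part3 : Tendsto (fun s => theta s / s ^ 2) atBot (nhds 1) := by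
  have heq : ∀ s : ℝ, theta s / s ^ 2 = (1/2) / s^2 + 1 / (4 * s^2 * G s) := by
    intro s
    rw [theta_eq, add_div]
    congr 1
    rw [div_div, show 4 * G s * s^2 = 4 * s^2 * G s by ring]
  have h1 : Tendsto (fun s : ℝ => (1/2) / s^2) atBot (nhds 0) := by
    have := sq_tendsto.inv_tendsto_atTop.const_mul ((1:ℝ)/2)
    rw [mul_zero] at this
    refine this.congr fun s => ?_
    simp [div_eq_mul_inv]
  have h2 : Tendsto (fun s : ℝ => 1 / (4 * s^2 * G s)) atBot (nhds 1) := by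
    have := part3'.inv₀ one_ne_zero
    rw [inv_one] at this
    refine this.congr fun s => ?_
    simp [one_div]
  have := h1.add h2
  rw [zero_add] at this
  exact this.congr fun s => (heq s).symm

theorem theta_limits :
    Tendsto theta atTop (nhds (1 / 2)) ∧
    theta 0 = 1 ∧
    Tendsto (fun s => theta s / s ^ 2) atBot (nhds 1) :=
  ⟨part1, part2, part3⟩
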